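/- For all integers n > m ≥ 1, the quantity ln I(n)/v(n) is bounded as follows: 2·ln 2/(3^n+1) + ((3^{−m} − 3^{−n})·ln 4)/(1 + 3^{−n}) + (2/3)·(3^{−m}/(1 + 3^{−n}))·ln pc(m) < ln I(n)/v(n) < (2/(3^n+1))·( ln 2 + (1/3)·ln(β(m) + (3/2)·γ(m)) ) + ((3^{−m} − 3^{−n})/(1 + 3^{−n}))·( ln 4 + ln(1 + (β(m)−1)/4) + (1/3)·ln(1 + γ(m)^3/32) ) + (2/3)·(3^{−m}/(1 + 3^{−n}))·ln pc(m). -/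

import Mathlib

/-- One step of the recursion for the ice-model boundary counts
`(pa, pb, pc, pd)` on the Sierpinski gasket `SG(n)`. -/
def iceStep : ℕ × ℕ × ℕ × ℕ → ℕ × ℕ × ℕ × ℕ
  | (a, b, c, d) =>
    ((a + b) ^ 2 * (a + 3 * c + d),
     (a + b) ^ 2 * (b + 3 * c + d),
     a ^ 2 * b + b ^ 2 * a + (3 * c + d) ^ 3,
     a ^ 3 + b ^ 3 + (3 * c + d) ^ 3)

/-- The quadruple `(pa(n), pb(n), pc(n), pd(n))`. -/
def iceSeq : ℕ → ℕ × ℕ × ℕ × ℕ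
  | 0 => (0, 1, 0, 1)
  | n + 1 => iceStep (iceSeq n)

def pa (n : ℕ) : ℕ := (iceSeq n).1
def pb (n : ℕ) : ℕ := (iceSeq n).2.1
def pc (n : ℕ) : ℕ := (iceSeq n).2.2.1
def pd (n : ℕ) : ℕ := (iceSeq n).2.2.2

noncomputable def alphaSeq (n : ℕ) : ℝ := (pa n : ℝ) / (pb n : ℝ)
noncomputable def betaSeq (n : ℕ) : ℝ := (pd n : ℝ) / (pc n : ℝ)
noncomputable def gammaSeq (n : ℕ) : ℝ := (pb n : ℝ) / (pc n : ℝ)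

/-- The number of ice-model configurations on `SG(n)`. -/
def iceI (n : ℕ) : ℕ := 6 * pa n + 6 * pb n + 6 * pc n + 2 * pd n

/-- The number of vertices of `SG(n)` (the division is exact). -/
def vSG (n : ℕ) : ℕ := 3 * (3 ^ n + 1) / 2

lemma pa_succ (k : ℕ) : pa (k+1) = (pa k + pb k)^2 * (pa k + 3 * pc k + pd k) := rfl
lemma pb_succ (k : ℕ) : pb (k+1) = (pa k + pb k)^2 * (pb k + 3 * pc k + pd k) := rfl
lemma pc_succ (k : ℕ) : pc (k+1) = (pa k)^2 * pb k + (pb k)^2 * pa k + (3 * pc k + pd k)^3 := rfl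
lemma pd_succ (k : ℕ) : pd (k+1) = (pa k)^3 + (pb k)^3 + (3 * pc k + pd k)^3 := rfl

lemma inv : ∀ k, 1 ≤ k → 1 ≤ pa k ∧ pa k < pb k ∧ pb k ≤ 2 * pa k ∧ 1 ≤ pc k ∧ pc k ≤ pd k
    ∧ 4 * (pa k + pb k) ≤ 3 * (3 * pc k + pd k) := by
  intro k hk
  induction k with
  | zero => omega
  | succ k ih =>
    rcases Nat.eq_or_lt_of_le hk with h | h
    · have : k = 0 := by omega
      subst this; decide
    · obtain ⟨h1, h2, h3, h4, h5, h6⟩ := ih (by omega)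
      set a := pa k; set b := pb k; set c := pc k; set d := pd k
      rw [pa_succ, pb_succ, pc_succ, pd_succ]
      refine ⟨by nlinarith, by nlinarith, by nlinarith, ?_, ?_, ?_⟩
      · calc 1 ≤ (3*c+d)^3 := Nat.one_le_pow _ _ (by omega)
          _ ≤ _ := Nat.le_add_left _ _
      · zify; nlinarith [sq_nonneg ((a:ℤ) - b), (by positivity : (0:ℤ) ≤ (a:ℤ)+b)]
      · have e2 : (4*(a+b))^2 ≤ (3*(3*c+d))^2 := Nat.pow_le_pow_left h6 2
        have e3 : (4*(a+b))^3 ≤ (3*(3*c+d))^3 := Nat.pow_le_pow_left h6 3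
        have e2' : (3*c+d) * (4*(a+b))^2 ≤ (3*c+d) * (3*(3*c+d))^2 := Nat.mul_le_mul_left _ e2
        nlinarith [e3, e2', sq_nonneg (a+b)]

lemma low_aux (m : ℕ) (hm : 1 ≤ m) : ∀ k, m ≤ k → (8 * pc m)^(3^(k-m)) ≤ 8 * pc k := by
  intro k hk
  induction k, hk using Nat.le_induction with
  | base => simp
  | succ k hk ih =>
    obtain ⟨h1, h2, h3, h4, h5, h6⟩ := inv k (by omega)
    have e1 : k + 1 - m = (k - m) + 1 := by omega
    have e2 : (8 * pc m)^(3^(k+1-m)) = ((8 * pc m)^(3^(k-m)))^3 := by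
      rw [e1, pow_succ, pow_mul]
    have e3 : (8 * pc k)^3 ≤ 8 * pc (k+1) := by
      rw [pc_succ]
      have : (4 * pc k)^3 ≤ (3 * pc k + pd k)^3 := Nat.pow_le_pow_left (by omega) 3
      calc (8 * pc k)^3 = 8 * (64 * pc k ^3) := by ring
        _ ≤ 8 * (3 * pc k + pd k)^3 := by
            apply Nat.mul_le_mul_left; nlinarith
        _ ≤ _ := by nlinarith
    calc (8 * pc m)^(3^(k+1-m)) = ((8 * pc m)^(3^(k-m)))^3 := e2
      _ ≤ (8 * pc k)^3 := Nat.pow_le_pow_left ih 3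
      _ ≤ 8 * pc (k+1) := e3

lemma low_main (m n : ℕ) (hm : 1 ≤ m) (hmn : m < n) : (8 * pc m)^(3^(n-m)) < iceI n := by
  obtain ⟨h1, h2, h3, h4, h5, h6⟩ := inv n (by omega)
  have := low_aux m hm n (by omega)
  unfold iceI; omega

theorem gamma_step_abs (a b c d : ℝ) (h1 : 1 ≤ a) (h2 : a < b) (h3 : b ≤ 2*a) (h4 : 1 ≤ c)
    (h5 : c ≤ d) (h6 : 4*(a+b) ≤ 3*(3*c+d)) :
    c * ((a+b)^2 * (b + (3*c+d))) ≤ b * (a^2*b + b^2*a + (3*c+d)^3) := by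
  set f := 3*c+d with hf
  have hb2 : b ≤ f/2 := by nlinarith
  have h4c : c ≤ f/4 := by nlinarith
  have hs : a + b ≤ 2*b := by nlinarith
  have hbpos : (0:ℝ) < b := by nlinarith
  have hfpos : (0:ℝ) < f := by nlinarith
  have habpos : (0:ℝ) ≤ a + b := by nlinarith
  clear_value f
  calc c * ((a+b)^2 * (b + f)) ≤ (f/4) * ((2*b)^2 * (f/2 + f)) := by gcongr
    _ = (3/2) * (b*(b*(f*f))) := by ring
    _ ≤ (3/2) * ((f/2)*(b*(f*f))) := by gcongr
    _ = (3/4) * (b * f^3) := by ring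
    _ ≤ b * (a^2*b + b^2*a + f^3) := by
        nlinarith [sq_nonneg (a*b), mul_pos hbpos (pow_pos hfpos 3),
          mul_pos (show (0:ℝ) < a by linarith) (pow_pos hbpos 3)]

theorem beta_step_abs (a b c d A B C D : ℝ)
    (h1 : 1 ≤ a) (h2 : a < b) (h3 : b ≤ 2*a) (h4 : 1 ≤ c) (h5 : c ≤ d)
    (h6 : 4*(a+b) ≤ 3*(3*c+d))
    (hA : A = (a+b)^2*(a+(3*c+d))) (hB : B = (a+b)^2*(b+(3*c+d)))
    (hC : C = a^2*b + b^2*a + (3*c+d)^3) (hD : D = a^3 + b^3 + (3*c+d)^3) :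
    C * (A^3 + B^3 + (3*C+D)^3) ≤ D * (A^2*B + B^2*A + (3*C+D)^3) := by
  have hfpos : (0:ℝ) < 3*c+d := by linarith
  have habpos : (0:ℝ) ≤ a + b := by linarith
  have hsf : a + b ≤ 3*c+d := by linarith
  have hE : (0:ℝ) ≤ (a+b)*(b-a)^2 := by positivity
  have hCD : D = C + (a+b)*(b-a)^2 := by rw [hC, hD]; ring
  have hC2f : C ≤ 2*(3*c+d)^3 := by
    have hs3 : (a+b)^3 ≤ (3*c+d)^3 := by gcongr
    have hab : 4*(a^2*b + b^2*a) ≤ (a+b)^3 := by nlinarith [sq_nonneg (a-b)]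
    rw [hC]; nlinarith [pow_pos hfpos 3]
  have hCf3 : (3*c+d)^3 ≤ C := by
    rw [hC]
    nlinarith [mul_pos (mul_pos (show (0:ℝ)<a by linarith) (show (0:ℝ)<a by linarith))
        (show (0:ℝ)<b by linarith),
      mul_pos (mul_pos (show (0:ℝ)<b by linarith) (show (0:ℝ)<b by linarith))
        (show (0:ℝ)<a by linarith)]
  have hF4 : 4*(3*c+d)^3 ≤ 3*C + D := by
    have : C ≤ D := by rw [hCD]; linarith
    linarith
  have hF3 : 64*(3*c+d)^9 ≤ (3*C+D)^3 := by
    have h0 : (0:ℝ) ≤ 4*(3*c+d)^3 := by positivity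
    calc 64*(3*c+d)^9 = (4*(3*c+d)^3)^3 := by ring
      _ ≤ (3*C+D)^3 := by gcongr
  have hfact : C * ((A+B)*(B-A)^2) =
      (C * ((a+b)^5*((a+b)+2*(3*c+d)))) * ((a+b)*(b-a)^2) := by rw [hA, hB]; ring
  have hmid : C * ((a+b)^5*((a+b)+2*(3*c+d))) ≤ (2*(3*c+d)^3) * ((3*c+d)^5*(3*(3*c+d))) := by
    have e1 : (a+b)^5 ≤ (3*c+d)^5 := by gcongr
    have e2 : (a+b)+2*(3*c+d) ≤ 3*(3*c+d) := by linarith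
    have e3 : (a+b)^5*((a+b)+2*(3*c+d)) ≤ (3*c+d)^5*(3*(3*c+d)) :=
      mul_le_mul e1 e2 (by positivity) (by positivity)
    exact mul_le_mul hC2f e3 (by positivity) (by positivity)
  have hkey : C * ((A+B)*(B-A)^2) ≤ 6*(3*c+d)^9*((a+b)*(b-a)^2) := by
    rw [hfact]
    calc (C * ((a+b)^5*((a+b)+2*(3*c+d)))) * ((a+b)*(b-a)^2)
        ≤ ((2*(3*c+d)^3) * ((3*c+d)^5*(3*(3*c+d)))) * ((a+b)*(b-a)^2) :=
          mul_le_mul_of_nonneg_right hmid hE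
      _ = 6*(3*c+d)^9*((a+b)*(b-a)^2) := by ring
  have t1 : (0:ℝ) ≤ ((a+b)*(b-a)^2) * (A^2*B + B^2*A) := by
    have hApos : (0:ℝ) ≤ A := by
      rw [hA]; exact mul_nonneg (sq_nonneg _) (by linarith)
    have hBpos : (0:ℝ) ≤ B := by
      rw [hB]; exact mul_nonneg (sq_nonneg _) (by linarith)
    exact mul_nonneg hE (add_nonneg (mul_nonneg (sq_nonneg A) hBpos)
      (mul_nonneg (sq_nonneg B) hApos))
  have t2 : 64*(3*c+d)^9 * ((a+b)*(b-a)^2) ≤ (3*C+D)^3 * ((a+b)*(b-a)^2) :=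
    mul_le_mul_of_nonneg_right hF3 hE
  have t4 : (0:ℝ) ≤ (3*c+d)^9 * ((a+b)*(b-a)^2) := by positivity
  have expand : D*(A^2*B + B^2*A + (3*C+D)^3) - C*(A^3 + B^3 + (3*C+D)^3) =
      ((a+b)*(b-a)^2)*(A^2*B + B^2*A) + ((a+b)*(b-a)^2)*(3*C+D)^3
        - C*((A+B)*(B-A)^2) := by
    rw [hCD]; ring
  linarith [expand, hkey, t1, t2, t4]

-- real casts of the invariant
lemma rinv (k : ℕ) (hk : 1 ≤ k) : (1:ℝ) ≤ pa k ∧ (pa k:ℝ) < pb k ∧ (pb k:ℝ) ≤ 2*pa k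
    ∧ (1:ℝ) ≤ pc k ∧ (pc k:ℝ) ≤ pd k ∧ 4*((pa k:ℝ)+pb k) ≤ 3*(3*(pc k:ℝ)+pd k) := by
  obtain ⟨h1, h2, h3, h4, h5, h6⟩ := inv k hk
  refine ⟨by exact_mod_cast h1, by exact_mod_cast h2, by exact_mod_cast h3,
    by exact_mod_cast h4, by exact_mod_cast h5, by exact_mod_cast h6⟩

lemma rpa_succ (k : ℕ) : (pa (k+1):ℝ) = ((pa k:ℝ)+pb k)^2*((pa k:ℝ)+(3*(pc k:ℝ)+pd k)) := by
  rw [pa_succ]; push_cast; ring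
lemma rpb_succ (k : ℕ) : (pb (k+1):ℝ) = ((pa k:ℝ)+pb k)^2*((pb k:ℝ)+(3*(pc k:ℝ)+pd k)) := by
  rw [pb_succ]; push_cast; ring
lemma rpc_succ (k : ℕ) : (pc (k+1):ℝ) = (pa k:ℝ)^2*pb k + (pb k:ℝ)^2*pa k + (3*(pc k:ℝ)+pd k)^3 := by
  rw [pc_succ]; push_cast; ring
lemma rpd_succ (k : ℕ) : (pd (k+1):ℝ) = (pa k:ℝ)^3 + (pb k:ℝ)^3 + (3*(pc k:ℝ)+pd k)^3 := by
  rw [pd_succ]; push_cast; ring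

lemma pc_pos (k : ℕ) (hk : 1 ≤ k) : (0:ℝ) < pc k :=
  lt_of_lt_of_le one_pos (rinv k hk).2.2.2.1

lemma gamma_step (k : ℕ) (hk : 1 ≤ k) : gammaSeq (k+1) ≤ gammaSeq k := by
  obtain ⟨h1, h2, h3, h4, h5, h6⟩ := rinv k hk
  rw [gammaSeq, gammaSeq, div_le_div_iff₀ (pc_pos (k+1) (by omega)) (pc_pos k hk)]
  rw [rpb_succ, rpc_succ]
  linarith [gamma_step_abs _ _ _ _ h1 h2 h3 h4 h5 h6]

lemma beta_step (k : ℕ) (hk : 1 ≤ k) : betaSeq (k+1) ≤ betaSeq k := by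
  rw [betaSeq, betaSeq, div_le_div_iff₀ (pc_pos (k+1) (by omega)) (pc_pos k hk)]
  rcases Nat.lt_or_ge k 2 with h | h
  · have hk1 : k = 1 := by omega
    subst hk1
    have e1 : pd 2 = 134 := rfl
    have e2 : pc 1 = 1 := rfl
    have e3 : pd 1 = 2 := rfl
    have e4 : pc 2 = 131 := rfl
    rw [e1, e2, e3, e4]; norm_num
  · obtain ⟨j, rfl⟩ : ∃ j, k = j + 1 := ⟨k - 1, by omega⟩
    obtain ⟨h1, h2, h3, h4, h5, h6⟩ := rinv j (by omega)
    have h := beta_step_abs (pa j) (pb j) (pc j) (pd j)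
      (pa (j+1)) (pb (j+1)) (pc (j+1)) (pd (j+1)) h1 h2 h3 h4 h5 h6
      (rpa_succ j) (rpb_succ j) (rpc_succ j) (rpd_succ j)
    rw [rpd_succ (j+1), rpc_succ (j+1)]
    linarith [h]

lemma beta_antitone (m k : ℕ) (hm : 1 ≤ m) (hk : m ≤ k) : betaSeq k ≤ betaSeq m := by
  induction k, hk using Nat.le_induction with
  | base => exact le_refl _
  | succ k hk ih => exact (beta_step k (le_trans hm hk)).trans ih

lemma gamma_antitone (m k : ℕ) (hm : 1 ≤ m) (hk : m ≤ k) : gammaSeq k ≤ gammaSeq m := by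
  induction k, hk using Nat.le_induction with
  | base => exact le_refl _
  | succ k hk ih => exact (gamma_step k (le_trans hm hk)).trans ih

lemma beta_ge_one (k : ℕ) (hk : 1 ≤ k) : 1 ≤ betaSeq k := by
  rw [betaSeq, le_div_iff₀ (pc_pos k hk), one_mul]
  exact (rinv k hk).2.2.2.2.1

lemma gamma_pos (k : ℕ) (hk : 1 ≤ k) : 0 < gammaSeq k := by
  have hb : (0:ℝ) < pb k := lt_of_le_of_lt (by positivity) (rinv k hk).2.1
  exact div_pos hb (pc_pos k hk)

lemma cstep (m k : ℕ) (hm : 1 ≤ m) (hk : m ≤ k) :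
    (pc (k+1):ℝ) ≤ (pc k:ℝ)^3 * ((3+betaSeq m)^3 * (1+gammaSeq m^3/32)) := by
  obtain ⟨h1, h2, h3, h4, h5, h6⟩ := rinv k (le_trans hm hk)
  have hCk : (0:ℝ) < pc k := pc_pos k (le_trans hm hk)
  have hCm : (0:ℝ) < pc m := pc_pos m hm
  have hβ : betaSeq k ≤ betaSeq m := beta_antitone m k hm hk
  have hγ : gammaSeq k ≤ gammaSeq m := gamma_antitone m k hm hk
  have hβ1 : 1 ≤ betaSeq m := beta_ge_one m hm
  have hγ0 : 0 < gammaSeq m := gamma_pos m hm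
  have hb : (pb k:ℝ) ≤ gammaSeq m * pc k := by
    have : (pb k:ℝ)/(pc k:ℝ) ≤ gammaSeq m := hγ
    calc (pb k:ℝ) = (pb k:ℝ)/(pc k:ℝ) * pc k := by field_simp
      _ ≤ gammaSeq m * pc k := by gcongr
  have hd : (pd k:ℝ) ≤ betaSeq m * pc k := by
    have : (pd k:ℝ)/(pc k:ℝ) ≤ betaSeq m := hβ
    calc (pd k:ℝ) = (pd k:ℝ)/(pc k:ℝ) * pc k := by field_simp
      _ ≤ betaSeq m * pc k := by gcongr
  have hf : 3*(pc k:ℝ)+pd k ≤ (3+betaSeq m) * pc k := by nlinarith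
  have h64 : (64:ℝ) ≤ (3+betaSeq m)^3 := by
    have h4' : (4:ℝ) ≤ 3+betaSeq m := by linarith
    calc (64:ℝ) = 4^3 := by norm_num
      _ ≤ (3+betaSeq m)^3 := by gcongr <;> norm_num
  have hbnn : (0:ℝ) ≤ pb k := by positivity
  have hfnn : (0:ℝ) ≤ 3*(pc k:ℝ)+pd k := by positivity
  have step1 : (pc (k+1):ℝ) ≤ 2*(pb k:ℝ)^3 + (3*(pc k:ℝ)+pd k)^3 := by
    rw [rpc_succ]
    nlinarith [mul_pos (show (0:ℝ)<pb k by linarith)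
        (mul_pos (show (0:ℝ)<(pb k:ℝ) - pa k by linarith) (show (0:ℝ)<(pb k:ℝ) + pa k by linarith)),
      mul_pos (mul_pos (show (0:ℝ)<pb k by linarith) (show (0:ℝ)<pb k by linarith))
        (show (0:ℝ)<(pb k:ℝ) - pa k by linarith)]
  have step2 : 2*(pb k:ℝ)^3 ≤ 2*(gammaSeq m * pc k)^3 := by gcongr
  have step3 : (3*(pc k:ℝ)+pd k)^3 ≤ ((3+betaSeq m) * pc k)^3 := by gcongr
  have step4 : 64*((gammaSeq m)^3*(pc k:ℝ)^3) ≤ (3+betaSeq m)^3*((gammaSeq m)^3*(pc k:ℝ)^3) := by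
    have h0 : (0:ℝ) ≤ (gammaSeq m)^3*(pc k:ℝ)^3 := by positivity
    exact mul_le_mul_of_nonneg_right h64 h0
  nlinarith [step1, step2, step3, step4]

lemma log_pc_bound (m : ℕ) (hm : 1 ≤ m) : ∀ k, m ≤ k →
    Real.log (pc k) ≤ (3:ℝ)^(k-m) * Real.log (pc m) +
      ((3:ℝ)^(k-m)-1)/2 * (3*Real.log (3+betaSeq m) + Real.log (1+gammaSeq m^3/32)) := by
  intro k hk
  induction k, hk using Nat.le_induction with
  | base => simp
  | succ k hk ih =>
    have hCk : (0:ℝ) < pc k := pc_pos k (le_trans hm hk)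
    have hβ1 : 1 ≤ betaSeq m := beta_ge_one m hm
    have hγ0 : 0 < gammaSeq m := gamma_pos m hm
    have hBpos : (0:ℝ) < 3+betaSeq m := by linarith
    have hGpos : (0:ℝ) < 1+gammaSeq m^3/32 := by positivity
    have hlog : Real.log (pc (k+1)) ≤
        3*Real.log (pc k) + (3*Real.log (3+betaSeq m) + Real.log (1+gammaSeq m^3/32)) := by
      have h1 : Real.log (pc (k+1)) ≤
          Real.log ((pc k:ℝ)^3 * ((3+betaSeq m)^3 * (1+gammaSeq m^3/32))) :=
        Real.log_le_log (by exact_mod_cast pc_pos (k+1) (by omega)) (cstep m k hm hk)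
      rw [Real.log_mul (by positivity) (by positivity),
        Real.log_mul (by positivity) (by positivity), Real.log_pow, Real.log_pow] at h1
      push_cast at h1
      linarith
    have e1 : k + 1 - m = (k - m) + 1 := by omega
    rw [e1, pow_succ]
    linarith

set_option maxHeartbeats 1000000 in
theorem stmt_13 (m n : ℕ) (hm : 1 ≤ m) (hmn : m < n) :
    2 * Real.log 2 / ((3 : ℝ) ^ n + 1) +
        (((3 : ℝ) ^ m)⁻¹ - ((3 : ℝ) ^ n)⁻¹) * Real.log 4 / (1 + ((3 : ℝ) ^ n)⁻¹) +
        2 / 3 * (((3 : ℝ) ^ m)⁻¹ / (1 + ((3 : ℝ) ^ n)⁻¹)) * Real.log (pc m) <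
      Real.log (iceI n) / (vSG n : ℝ) ∧
    Real.log (iceI n) / (vSG n : ℝ) <
      2 / ((3 : ℝ) ^ n + 1) *
          (Real.log 2 + 1 / 3 * Real.log (betaSeq m + 3 / 2 * gammaSeq m)) +
        (((3 : ℝ) ^ m)⁻¹ - ((3 : ℝ) ^ n)⁻¹) / (1 + ((3 : ℝ) ^ n)⁻¹) *
          (Real.log 4 + Real.log (1 + (betaSeq m - 1) / 4) +
            1 / 3 * Real.log (1 + gammaSeq m ^ 3 / 32)) +
        2 / 3 * (((3 : ℝ) ^ m)⁻¹ / (1 + ((3 : ℝ) ^ n)⁻¹)) * Real.log (pc m) := by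
  have hn1 : 1 ≤ n := by omega
  have hCm : (0:ℝ) < pc m := pc_pos m hm
  have hCn : (0:ℝ) < pc n := pc_pos n hn1
  obtain ⟨a1, a2, a3, a4, a5, a6⟩ := rinv n hn1
  have hβ1 : 1 ≤ betaSeq m := beta_ge_one m hm
  have hγ0 : 0 < gammaSeq m := gamma_pos m hm
  have hIc : (iceI n:ℝ) = 6*(pa n:ℝ)+6*(pb n:ℝ)+6*(pc n:ℝ)+2*(pd n:ℝ) := by
    unfold iceI; push_cast; ring
  have hIpos : (0:ℝ) < iceI n := by rw [hIc]; linarith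
  have h8l : Real.log (8:ℝ) = 3*Real.log 2 := by
    rw [show (8:ℝ) = 2^3 by norm_num, Real.log_pow]; push_cast; ring
  -- lower key
  have key_low : (3:ℝ)^(n-m) * (3*Real.log 2 + Real.log (pc m)) < Real.log (iceI n) := by
    have hN := low_main m n hm hmn
    have hcast : (8*(pc m:ℝ))^(3^(n-m)) < (iceI n:ℝ) := by exact_mod_cast hN
    have h8 : (0:ℝ) < 8*(pc m:ℝ) := by linarith
    have hlog := Real.log_lt_log (pow_pos h8 _) hcast
    rw [Real.log_pow, Real.log_mul (by norm_num) (ne_of_gt hCm), h8l] at hlog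
    calc (3:ℝ)^(n-m) * (3*Real.log 2 + Real.log (pc m))
        = ((3^(n-m):ℕ):ℝ) * (3*Real.log 2 + Real.log (pc m)) := by push_cast; ring
      _ < _ := hlog
  -- upper key
  have hγmono : gammaSeq n ≤ gammaSeq m := gamma_antitone m n hm (le_of_lt hmn)
  have hβmono : betaSeq n ≤ betaSeq m := beta_antitone m n hm (le_of_lt hmn)
  have hBn : (pb n:ℝ)*(pc m:ℝ) ≤ (pb m:ℝ)*(pc n:ℝ) := by
    rw [gammaSeq, gammaSeq, div_le_div_iff₀ hCn hCm] at hγmono; exact hγmono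
  have hDn : (pd n:ℝ)*(pc m:ℝ) ≤ (pd m:ℝ)*(pc n:ℝ) := by
    rw [betaSeq, betaSeq, div_le_div_iff₀ hCn hCm] at hβmono; exact hβmono
  have hCmDm : (pc m:ℝ) ≤ pd m := (rinv m hm).2.2.2.2.1
  have hIlt : (iceI n:ℝ) < (8*betaSeq m + 12*gammaSeq m)*(pc n:ℝ) := by
    have hstep : (iceI n:ℝ)*(pc m:ℝ) < (8*(pd m:ℝ)+12*(pb m:ℝ))*(pc n:ℝ) := by
      rw [hIc]
      nlinarith [mul_lt_mul_of_pos_right a2 hCm, hBn, hDn,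
        mul_le_mul_of_nonneg_right hCmDm (le_of_lt hCn)]
    have heq : (8*betaSeq m + 12*gammaSeq m)*(pc n:ℝ)
        = (8*(pd m:ℝ)+12*(pb m:ℝ))*(pc n:ℝ)/(pc m:ℝ) := by
      rw [betaSeq, gammaSeq]; field_simp
    rw [heq, lt_div_iff₀ hCm]
    linarith [hstep]
  have hpos2 : (0:ℝ) < betaSeq m + 3/2*gammaSeq m := by linarith
  have hlogI : Real.log (iceI n) <
      3*Real.log 2 + Real.log (betaSeq m + 3/2*gammaSeq m) + Real.log (pc n) := by
    have h1 := Real.log_lt_log hIpos hIlt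
    rw [show (8*betaSeq m + 12*gammaSeq m)*(pc n:ℝ)
        = 8*((betaSeq m + 3/2*gammaSeq m)*(pc n:ℝ)) from by ring] at h1
    rw [Real.log_mul (by norm_num) (ne_of_gt (mul_pos hpos2 hCn)),
      Real.log_mul (ne_of_gt hpos2) (ne_of_gt hCn), h8l] at h1
    linarith
  have hlogC := log_pc_bound m hm n (le_of_lt hmn)
  have hlog4B : Real.log 4 + Real.log (1+(betaSeq m-1)/4) = Real.log (3+betaSeq m) := by
    rw [← Real.log_mul (by norm_num) (ne_of_gt (by linarith : (0:ℝ) < 1+(betaSeq m-1)/4))]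
    congr 1; ring
  have key_up : Real.log (iceI n) < 3*Real.log 2 + Real.log (betaSeq m + 3/2*gammaSeq m)
      + ((3:ℝ)^(n-m)-1)*(3/2*(Real.log 4 + Real.log (1+(betaSeq m-1)/4))
          + 1/2*Real.log (1+gammaSeq m^3/32))
      + (3:ℝ)^(n-m)*Real.log (pc m) := by
    rw [hlog4B]
    linarith [hlogI, hlogC]
  -- assembly
  have hvN : 2 * vSG n = 3*(3^n+1) := by
    have hmod : 3^n % 2 = 1 := by
      rw [Nat.pow_mod]; norm_num
    have hdvd : 2 ∣ 3*(3^n+1) := by omega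
    unfold vSG
    omega
  have hv : (vSG n:ℝ) = 3*((3:ℝ)^n+1)/2 := by
    have := congrArg (Nat.cast : ℕ → ℝ) hvN
    push_cast at this
    linarith
  have hPM : (3:ℝ)^n = (3:ℝ)^(n-m)*(3:ℝ)^m := by
    rw [← pow_add]; congr 1; omega
  have hMne : ((3:ℝ)^m) ≠ 0 := by positivity
  have hPne : ((3:ℝ)^(n-m)) ≠ 0 := by positivity
  have hSne : ((3:ℝ)^(n-m)*(3:ℝ)^m + 1) ≠ 0 := by positivity
  have hS1ne : (1 + ((3:ℝ)^(n-m)*(3:ℝ)^m)⁻¹) ≠ 0 := by positivity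
  have hD : (0:ℝ) < 3*((3:ℝ)^n+1) := by positivity
  have hrw : Real.log (iceI n) / (vSG n:ℝ) = 2*Real.log (iceI n)/(3*((3:ℝ)^n+1)) := by
    rw [hv]
    rw [div_div_eq_mul_div]
    ring
  have hlhs : 2 * Real.log 2 / ((3 : ℝ) ^ n + 1) +
        (((3 : ℝ) ^ m)⁻¹ - ((3 : ℝ) ^ n)⁻¹) * Real.log 4 / (1 + ((3 : ℝ) ^ n)⁻¹) +
        2 / 3 * (((3 : ℝ) ^ m)⁻¹ / (1 + ((3 : ℝ) ^ n)⁻¹)) * Real.log (pc m)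
      = 2*((3:ℝ)^(n-m) * (3*Real.log 2 + Real.log (pc m)))/(3*((3:ℝ)^n+1)) := by
    rw [show Real.log 4 = 2*Real.log 2 from by
      rw [show (4:ℝ) = 2^2 by norm_num, Real.log_pow]; push_cast; ring]
    rw [hPM]
    field_simp
    ring
  have hrhs : 2 / ((3 : ℝ) ^ n + 1) *
          (Real.log 2 + 1 / 3 * Real.log (betaSeq m + 3 / 2 * gammaSeq m)) +
        (((3 : ℝ) ^ m)⁻¹ - ((3 : ℝ) ^ n)⁻¹) / (1 + ((3 : ℝ) ^ n)⁻¹) *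
          (Real.log 4 + Real.log (1 + (betaSeq m - 1) / 4) +
            1 / 3 * Real.log (1 + gammaSeq m ^ 3 / 32)) +
        2 / 3 * (((3 : ℝ) ^ m)⁻¹ / (1 + ((3 : ℝ) ^ n)⁻¹)) * Real.log (pc m)
      = 2*(3*Real.log 2 + Real.log (betaSeq m + 3/2*gammaSeq m)
      + ((3:ℝ)^(n-m)-1)*(3/2*(Real.log 4 + Real.log (1+(betaSeq m-1)/4))
          + 1/2*Real.log (1+gammaSeq m^3/32))
      + (3:ℝ)^(n-m)*Real.log (pc m))/(3*((3:ℝ)^n+1)) := by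
    rw [hPM]
    set P := (3:ℝ)^(n-m)
    set M := (3:ℝ)^m
    set l2 := Real.log 2
    set lA := Real.log (betaSeq m + 3/2*gammaSeq m)
    set l4 := Real.log 4
    set lB := Real.log (1+(betaSeq m-1)/4)
    set lC := Real.log (1+gammaSeq m^3/32)
    set lc := Real.log (pc m)
    field_simp
  constructor
  · rw [hrw, hlhs]
    exact (div_lt_div_iff_of_pos_right hD).mpr (by linarith [key_low])
  · rw [hrw, hrhs]
    exact (div_lt_div_iff_of_pos_right hD).mpr (by linarith [key_up])
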